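/- Let G ⊆ 𝕋_max^{d+1} be a finite set with 0 ∈ supp(g) for every g ∈ G. Then the set 𝒪(G) = ⋃_{g∈G} {x ∈ 𝕋_max^{d+1} : x₀ − g₀ ≤ min(x_j − g_j : j ∈ supp(g)\{0})} is a max-tropical cone; in fact it is the max-tropical cone generated by G together with the negated tropical unit vectors −e⁽¹⁾,…,−e⁽ᵈ⁾. -/

import Mathlib

/-- A max-tropical cone in `𝕋_max^{d+1}` where `𝕋_max = ℝ ∪ {-∞}` is modeled by
`WithBot ℝ`: a nonempty set closed under coordinatewise max of translates. -/
def IsMaxTropCone {d : ℕ} (C : Set (Fin (d + 1) → WithBot ℝ)) : Prop :=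
  C.Nonempty ∧ ∀ (lam mu : WithBot ℝ), ∀ x ∈ C, ∀ y ∈ C,
    (fun k => max (lam + x k) (mu + y k)) ∈ C

def IsSmallestMaxTropConeContaining {d : ℕ} (C G : Set (Fin (d + 1) → WithBot ℝ)) : Prop :=
  IsMaxTropCone C ∧ G ⊆ C ∧ ∀ D, IsMaxTropCone D → G ⊆ D → C ⊆ D

lemma cone_sup' {d : ℕ} {D : Set (Fin (d+1) → WithBot ℝ)} (hD : IsMaxTropCone D)
    {ι : Type*} (lam : ι → WithBot ℝ) (v : ι → Fin (d+1) → WithBot ℝ) :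
    ∀ (s : Finset ι) (hs : s.Nonempty), (∀ i ∈ s, v i ∈ D) →
      (fun k => s.sup' hs (fun i => lam i + v i k)) ∈ D := by
  intro s
  induction s using Finset.cons_induction with
  | empty => intro hs; simp at hs
  | cons i s hi ih =>
    intro hs hv
    rcases s.eq_empty_or_nonempty with rfl | hs'
    · have := hD.2 (lam i) (lam i) (v i) (hv i (by simp)) (v i) (hv i (by simp))
      simpa using this
    · have h1 := ih hs' (fun j hj => hv j (Finset.mem_cons_of_mem hj))
      have h2 := hD.2 (lam i) 0 (v i) (hv i (Finset.mem_cons_self i s)) _ h1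
      have : (fun k => (Finset.cons i s hi).sup' hs (fun j => lam j + v j k)) =
          (fun k => max (lam i + v i k) (0 + (fun k => s.sup' hs' (fun j => lam j + v j k)) k)) := by
        funext k
        rw [Finset.sup'_cons hs']; simp
      rw [this]; exact h2

/-- For a finite nonempty `G ⊆ 𝕋_max^{d+1}` with `0 ∈ supp g` for all `g ∈ G`, the set
`𝒪(G) = ⋃_{g∈G} {x : x₀ - g₀ ≤ min (x_j - g_j : j ∈ supp(g)\{0})}` (the inequality
`x₀ - g₀ ≤ x_j - g_j` being expressed as `x₀ + g_j ≤ x_j + g₀` to avoid subtraction)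
is a max-tropical cone; in fact it is the max-tropical cone generated by `G` together
with the negated tropical unit vectors `-e⁽¹⁾, …, -e⁽ᵈ⁾`. -/
theorem monomialMaxTropCone_generated {d : ℕ} (G : Finset (Fin (d + 1) → WithBot ℝ))
    (hGne : G.Nonempty) (hG0 : ∀ g ∈ G, g 0 ≠ ⊥) :
    IsSmallestMaxTropConeContaining
      (⋃ g ∈ G, {x : Fin (d + 1) → WithBot ℝ |
        ∀ j, j ≠ 0 → g j ≠ ⊥ → x 0 + g j ≤ x j + g 0})
      ((G : Set (Fin (d + 1) → WithBot ℝ)) ∪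
        Set.range (fun i : {i : Fin (d + 1) // i ≠ 0} =>
          fun k => if k = (i : Fin (d + 1)) then (0 : WithBot ℝ) else ⊥)) := by
  set O : Set (Fin (d + 1) → WithBot ℝ) :=
    ⋃ g ∈ G, {x : Fin (d + 1) → WithBot ℝ |
        ∀ j, j ≠ 0 → g j ≠ ⊥ → x 0 + g j ≤ x j + g 0} with hO
  have hGO : ∀ g ∈ G, g ∈ O := by
    intro g hg
    refine Set.mem_biUnion hg ?_
    intro j hj hbj
    rw [add_comm]
  have hcone : IsMaxTropCone O := by
    constructor
    · obtain ⟨g, hg⟩ := hGne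
      exact ⟨g, hGO g hg⟩
    · intro lam mu x hx y hy
      obtain ⟨g, hg, hxg⟩ := Set.mem_iUnion₂.1 hx
      obtain ⟨h, hh, hyh⟩ := Set.mem_iUnion₂.1 hy
      rcases le_total (mu + y 0) (lam + x 0) with hle | hle
      · refine Set.mem_biUnion hg ?_
        intro j hj hbj
        simp only [max_eq_left hle]
        calc lam + x 0 + g j = lam + (x 0 + g j) := by rw [add_assoc]
          _ ≤ lam + (x j + g 0) := add_le_add le_rfl (hxg j hj hbj)
          _ = (lam + x j) + g 0 := by rw [add_assoc]
          _ ≤ max (lam + x j) (mu + y j) + g 0 := add_le_add (le_max_left _ _) le_rfl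
      · refine Set.mem_biUnion hh ?_
        intro j hj hbj
        simp only [max_eq_right hle]
        calc mu + y 0 + h j = mu + (y 0 + h j) := by rw [add_assoc]
          _ ≤ mu + (y j + h 0) := add_le_add le_rfl (hyh j hj hbj)
          _ = (mu + y j) + h 0 := by rw [add_assoc]
          _ ≤ max (lam + x j) (mu + y j) + h 0 := add_le_add (le_max_right _ _) le_rfl
  refine ⟨hcone, ?_, ?_⟩
  · rintro x (hx | ⟨i, rfl⟩)
    · exact hGO x hx
    · obtain ⟨g, hg⟩ := hGne
      refine Set.mem_biUnion hg ?_
      intro j hj hbj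
      have : (if (0 : Fin (d+1)) = (i : Fin (d+1)) then (0:WithBot ℝ) else ⊥) = ⊥ := by
        simp [Ne.symm i.2]
      simp only [this, WithBot.bot_add]
      exact bot_le
  · intro D hD hsub x hx
    obtain ⟨g, hg, hxg⟩ := Set.mem_iUnion₂.1 hx
    obtain ⟨r, hr⟩ := WithBot.ne_bot_iff_exists.1 (hG0 g hg)
    set lam : Fin (d+1) → WithBot ℝ := fun i => if i = 0 then x 0 + ↑(-r) else x i with hlam
    set v : Fin (d+1) → (Fin (d+1) → WithBot ℝ) := fun i =>
      if h : i = 0 then g else (fun k => if k = i then (0:WithBot ℝ) else ⊥) with hv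
    have hvD : ∀ i ∈ Finset.univ (α := Fin (d+1)), v i ∈ D := by
      intro i _
      by_cases hi : i = 0
      · simp only [hv, hi, dif_pos]
        exact hsub (Or.inl hg)
      · simp only [hv, dif_neg hi]
        exact hsub (Or.inr ⟨⟨i, hi⟩, rfl⟩)
    have key := cone_sup' hD lam v Finset.univ Finset.univ_nonempty hvD
    have heq : (fun k => Finset.univ.sup' Finset.univ_nonempty (fun i => lam i + v i k)) = x := by
      funext k
      apply le_antisymm
      · apply Finset.sup'_le
        intro i _
        by_cases hi : i = 0
        · subst hi
          simp only [hlam, hv, if_pos rfl, dif_pos rfl]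
          by_cases hk : k = 0
          · subst hk
            rw [← hr, add_assoc, ← WithBot.coe_add, neg_add_cancel, WithBot.coe_zero, add_zero]
          · cases hgk : g k with
            | bot => simp
            | coe s =>
              have hle : x 0 + ↑s ≤ x k + ↑r := by
                have := hxg k hk (by rw [hgk]; exact WithBot.coe_ne_bot)
                rwa [hgk, ← hr] at this
              calc x 0 + ↑(-r) + ↑s = x 0 + ↑s + ↑(-r) := by
                    rw [add_assoc, add_assoc, add_comm (WithBot.some (-r))]
                _ ≤ x k + ↑r + ↑(-r) := add_le_add hle le_rfl
                _ = x k := by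
                    rw [add_assoc, ← WithBot.coe_add, add_neg_cancel, WithBot.coe_zero, add_zero]
        · simp only [hlam, hv, if_neg hi, dif_neg hi]
          by_cases hk : k = i
          · rw [if_pos hk, add_zero, hk]
          · rw [if_neg hk]; simp
      · refine Finset.le_sup' (fun i => lam i + v i k) (Finset.mem_univ k) |>.trans_eq' ?_
        by_cases hk : k = 0
        · subst hk
          simp only [hlam, hv, if_pos rfl, dif_pos rfl]
          rw [← hr, add_assoc, ← WithBot.coe_add, neg_add_cancel, WithBot.coe_zero, add_zero]
        · simp only [hlam, hv, if_neg hk, dif_neg hk, if_pos rfl, if_true, add_zero]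
    rwa [heq] at key
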